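/- Let (T, q) be a classical solution of the Guyer–Krumhansl system on (0,l) with boundary conditions q(0,t) = q(l,t) = 0. Then for every t ≥ 0 the functional energy E is differentiable at t and E'(t) = −(1/k)∫_0^l q(x,t)² dx − (μ²/k)∫_0^l (∂_x q(x,t))² dx; in particular E'(t) ≤ 0. -/

import Mathlib

open Set MeasureTheory intervalIntegral

/-- A classical solution of the one-dimensional Guyer–Krumhansl system on `(0, l)`:
`T` is the temperature, `q` the heat flux, and `Tt, Tx, qt, qx, qxx` are the
corresponding partial derivatives (continuous on `[0,l] × [0,∞)`), satisfying
`ρ c T_t + q_x = 0` and `τ_q q_t + q − μ² q_xx + k T_x = 0` on `(0,l) × (0,∞)`,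
with adiabatic boundary conditions `q(0,t) = q(l,t) = 0` for all `t ≥ 0`. -/
structure IsGKSolution (l ρ c τq μ2 k : ℝ)
    (T q Tt Tx qt qx qxx : ℝ → ℝ → ℝ) : Prop where
  contT : ContinuousOn (fun p : ℝ × ℝ => T p.1 p.2) (Icc (0:ℝ) l ×ˢ Ici (0:ℝ))
  contq : ContinuousOn (fun p : ℝ × ℝ => q p.1 p.2) (Icc (0:ℝ) l ×ˢ Ici (0:ℝ))
  hTt : ∀ x ∈ Icc (0:ℝ) l, ∀ t ∈ Ici (0:ℝ),
    HasDerivWithinAt (fun s => T x s) (Tt x t) (Ici (0:ℝ)) t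
  hTx : ∀ x ∈ Icc (0:ℝ) l, ∀ t ∈ Ici (0:ℝ),
    HasDerivWithinAt (fun y => T y t) (Tx x t) (Icc (0:ℝ) l) x
  hqt : ∀ x ∈ Icc (0:ℝ) l, ∀ t ∈ Ici (0:ℝ),
    HasDerivWithinAt (fun s => q x s) (qt x t) (Ici (0:ℝ)) t
  hqx : ∀ x ∈ Icc (0:ℝ) l, ∀ t ∈ Ici (0:ℝ),
    HasDerivWithinAt (fun y => q y t) (qx x t) (Icc (0:ℝ) l) x
  hqxx : ∀ x ∈ Icc (0:ℝ) l, ∀ t ∈ Ici (0:ℝ),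
    HasDerivWithinAt (fun y => qx y t) (qxx x t) (Icc (0:ℝ) l) x
  contTt : ContinuousOn (fun p : ℝ × ℝ => Tt p.1 p.2) (Icc (0:ℝ) l ×ˢ Ici (0:ℝ))
  contTx : ContinuousOn (fun p : ℝ × ℝ => Tx p.1 p.2) (Icc (0:ℝ) l ×ˢ Ici (0:ℝ))
  contqt : ContinuousOn (fun p : ℝ × ℝ => qt p.1 p.2) (Icc (0:ℝ) l ×ˢ Ici (0:ℝ))
  contqx : ContinuousOn (fun p : ℝ × ℝ => qx p.1 p.2) (Icc (0:ℝ) l ×ˢ Ici (0:ℝ))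
  contqxx : ContinuousOn (fun p : ℝ × ℝ => qxx p.1 p.2) (Icc (0:ℝ) l ×ˢ Ici (0:ℝ))
  pde1 : ∀ x ∈ Ioo (0:ℝ) l, ∀ t ∈ Ioi (0:ℝ), ρ * c * Tt x t + qx x t = 0
  pde2 : ∀ x ∈ Ioo (0:ℝ) l, ∀ t ∈ Ioi (0:ℝ),
    τq * qt x t + q x t - μ2 * qxx x t + k * Tx x t = 0
  bc0 : ∀ t : ℝ, 0 ≤ t → q 0 t = 0
  bcl : ∀ t : ℝ, 0 ≤ t → q l t = 0

/-- The functional energy `E(t) = (ρc/2)∫₀ˡ T² dx + (τ_q/(2k))∫₀ˡ q² dx`. -/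
noncomputable def gkEnergy (l ρ c τq k : ℝ) (T q : ℝ → ℝ → ℝ) (t : ℝ) : ℝ :=
  ρ * c / 2 * (∫ x in (0:ℝ)..l, (T x t) ^ 2)
    + τq / (2 * k) * (∫ x in (0:ℝ)..l, (q x t) ^ 2)

open Filter Topology

lemma gk_contOn_slice {l : ℝ} {g : ℝ → ℝ → ℝ}
    (hg : ContinuousOn (fun p : ℝ × ℝ => g p.1 p.2) (Icc (0:ℝ) l ×ˢ Ici (0:ℝ)))
    {t : ℝ} (ht : 0 ≤ t) : ContinuousOn (fun x => g x t) (Icc (0:ℝ) l) := by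
  have : ContinuousOn (fun x : ℝ => ((x, t) : ℝ × ℝ)) (Icc (0:ℝ) l) :=
    (continuous_id.prodMk continuous_const).continuousOn
  exact hg.comp this (fun x hx => ⟨hx, ht⟩)

lemma gk_cont_int {l : ℝ} (hl : 0 < l) {g : ℝ → ℝ → ℝ}
    (hg : ContinuousOn (fun p : ℝ × ℝ => g p.1 p.2) (Icc (0:ℝ) l ×ˢ Ici (0:ℝ))) :
    ∀ t₀ ∈ Ici (0:ℝ),
      ContinuousWithinAt (fun t => ∫ x in (0:ℝ)..l, g x t) (Ici (0:ℝ)) t₀ := by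
  intro t₀ ht₀
  have hIoc : Set.uIoc (0:ℝ) l = Ioc 0 l := uIoc_of_le hl.le
  obtain ⟨M, hM⟩ : ∃ M, ∀ p ∈ (Icc (0:ℝ) l ×ˢ Icc (0:ℝ) (t₀+1)), ‖g p.1 p.2‖ ≤ M :=
    ((isCompact_Icc.prod isCompact_Icc).exists_bound_of_continuousOn
      (hg.mono (prod_mono_right Icc_subset_Ici_self)))
  apply continuousWithinAt_of_dominated_interval (bound := fun _ => M)
  · filter_upwards [eventually_mem_nhdsWithin] with t ht
    rw [hIoc]
    exact ((gk_contOn_slice hg ht).mono Ioc_subset_Icc_self).aestronglyMeasurable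
      measurableSet_Ioc
  · have h2 : ∀ᶠ t in 𝓝[Ici (0:ℝ)] t₀, t < t₀ + 1 :=
      (gt_mem_nhds (by linarith)).filter_mono nhdsWithin_le_nhds
    filter_upwards [eventually_mem_nhdsWithin, h2] with t ht ht'
    filter_upwards with x hx
    rw [hIoc] at hx
    exact hM (x, t) ⟨Ioc_subset_Icc_self hx, ht, ht'.le⟩
  · exact intervalIntegrable_const
  · filter_upwards with x hx
    rw [hIoc] at hx
    have : ContinuousOn (fun t => g x t) (Ici (0:ℝ)) :=
      hg.comp ((continuous_const.prodMk continuous_id).continuousOn)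
        (fun t ht => ⟨Ioc_subset_Icc_self hx, ht⟩)
    exact this t₀ ht₀

lemma gk_deriv_int {l : ℝ} (hl : 0 < l) {g gt : ℝ → ℝ → ℝ}
    (hg : ContinuousOn (fun p : ℝ × ℝ => g p.1 p.2) (Icc (0:ℝ) l ×ˢ Ici (0:ℝ)))
    (hgt : ContinuousOn (fun p : ℝ × ℝ => gt p.1 p.2) (Icc (0:ℝ) l ×ˢ Ici (0:ℝ)))
    (hd : ∀ x ∈ Icc (0:ℝ) l, ∀ t ∈ Ici (0:ℝ),
      HasDerivWithinAt (fun s => g x s) (gt x t) (Ici (0:ℝ)) t)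
    {t₀ : ℝ} (ht₀ : 0 < t₀) :
    HasDerivAt (fun t => ∫ x in (0:ℝ)..l, g x t) (∫ x in (0:ℝ)..l, gt x t₀) t₀ := by
  have hIoc : Set.uIoc (0:ℝ) l = Ioc 0 l := uIoc_of_le hl.le
  obtain ⟨M, hM⟩ : ∃ M, ∀ p ∈ (Icc (0:ℝ) l ×ˢ Icc (t₀/2) (2*t₀)), ‖gt p.1 p.2‖ ≤ M :=
    ((isCompact_Icc.prod isCompact_Icc).exists_bound_of_continuousOn
      (hgt.mono (prod_mono_right (Icc_subset_Ici_self.trans (Ici_subset_Ici.mpr (by linarith))))))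
  have hball : ∀ t ∈ Metric.ball t₀ (t₀/2), t ∈ Icc (t₀/2) (2*t₀) := by
    intro t ht
    rw [Metric.mem_ball, Real.dist_eq, abs_lt] at ht
    constructor <;> linarith [ht.1, ht.2]
  have key := intervalIntegral.hasDerivAt_integral_of_dominated_loc_of_deriv_le
    (F := fun t x => g x t) (F' := fun t x => gt x t) (x₀ := t₀)
    (bound := fun _ => M) (a := (0:ℝ)) (b := l) (μ := volume)
    (Metric.ball_mem_nhds t₀ (half_pos ht₀)) ?_ ?_ ?_ ?_ intervalIntegrable_const ?_
  · exact key.2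
  · filter_upwards [isOpen_Ioi.eventually_mem ht₀] with t ht
    rw [hIoc]
    exact ((gk_contOn_slice hg (le_of_lt ht)).mono Ioc_subset_Icc_self).aestronglyMeasurable
      measurableSet_Ioc
  · exact ((gk_contOn_slice hg ht₀.le).mono (by rw [uIcc_of_le hl.le])).intervalIntegrable
  · rw [hIoc]
    exact ((gk_contOn_slice hgt ht₀.le).mono Ioc_subset_Icc_self).aestronglyMeasurable
      measurableSet_Ioc
  · filter_upwards with x hx
    intro t ht
    rw [hIoc] at hx
    exact hM (x, t) ⟨Ioc_subset_Icc_self hx, hball t ht⟩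
  · filter_upwards with x hx
    intro t ht
    rw [hIoc] at hx
    have htpos : 0 < t := lt_of_lt_of_le (half_pos ht₀) (hball t ht).1
    exact (hd x (Ioc_subset_Icc_self hx) t htpos.le).hasDerivAt (Ici_mem_nhds htpos)

lemma gk_value
    {l ρ c τq μ2 k : ℝ} (hl : 0 < l) (hρ : 0 < ρ) (hc : 0 < c)
    (hτq : 0 < τq) (hk : 0 < k)
    {T q Tt Tx qt qx qxx : ℝ → ℝ → ℝ}
    (hgk : IsGKSolution l ρ c τq μ2 k T q Tt Tx qt qx qxx)
    {t : ℝ} (ht : 0 < t) :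
    ρ * c / 2 * (∫ x in (0:ℝ)..l, 2 * T x t * Tt x t)
      + τq / (2 * k) * (∫ x in (0:ℝ)..l, 2 * q x t * qt x t)
    = -(1 / k) * (∫ x in (0:ℝ)..l, (q x t) ^ 2)
      - μ2 / k * (∫ x in (0:ℝ)..l, (qx x t) ^ 2) := by
  obtain ⟨contT, contq, hTt, hTx, hqt, hqx, hqxx, contTt, contTx, contqt, contqx, contqxx,
    pde1, pde2, bc0, bcl⟩ := hgk
  have ht0 : (0:ℝ) ≤ t := ht.le
  have huIcc : uIcc (0:ℝ) l = Icc 0 l := uIcc_of_le hl.le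
  have hIoc : Set.uIoc (0:ℝ) l = Ioc 0 l := uIoc_of_le hl.le
  have hII : ∀ {f : ℝ → ℝ}, ContinuousOn f (Icc (0:ℝ) l) →
      IntervalIntegrable f volume 0 l := fun h => (h.mono (by rw [huIcc])).intervalIntegrable
  have cT := gk_contOn_slice contT ht0
  have cq := gk_contOn_slice contq ht0
  have cTt := gk_contOn_slice contTt ht0
  have cTx := gk_contOn_slice contTx ht0
  have cqt := gk_contOn_slice contqt ht0
  have cqx := gk_contOn_slice contqx ht0
  have cqxx := gk_contOn_slice contqxx ht0
  have ibp1 : (∫ x in (0:ℝ)..l, (Tx x t * q x t + T x t * qx x t)) = 0 := by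
    have h := intervalIntegral.integral_eq_sub_of_hasDeriv_right_of_le hl.le
      (f := fun x => T x t * q x t) (f' := fun x => Tx x t * q x t + T x t * qx x t)
      (cT.mul cq)
      (fun x hx => ((((hTx x (Ioo_subset_Icc_self hx) t ht0).hasDerivAt
        (Icc_mem_nhds hx.1 hx.2)).mul ((hqx x (Ioo_subset_Icc_self hx) t ht0).hasDerivAt
        (Icc_mem_nhds hx.1 hx.2))).hasDerivWithinAt))
      (hII ((cTx.mul cq).add (cT.mul cqx)))
    rw [h]; simp [bcl t ht0, bc0 t ht0]
  have ibp2 : (∫ x in (0:ℝ)..l, (qx x t * qx x t + q x t * qxx x t)) = 0 := by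
    have h := intervalIntegral.integral_eq_sub_of_hasDeriv_right_of_le hl.le
      (f := fun x => q x t * qx x t) (f' := fun x => qx x t * qx x t + q x t * qxx x t)
      (cq.mul cqx)
      (fun x hx => ((((hqx x (Ioo_subset_Icc_self hx) t ht0).hasDerivAt
        (Icc_mem_nhds hx.1 hx.2)).mul ((hqxx x (Ioo_subset_Icc_self hx) t ht0).hasDerivAt
        (Icc_mem_nhds hx.1 hx.2))).hasDerivWithinAt))
      (hII ((cqx.mul cqx).add (cq.mul cqxx)))
    rw [h]; simp [bcl t ht0, bc0 t ht0]
  have hne : ∀ᵐ x : ℝ, x ≠ l := by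
    rw [MeasureTheory.ae_iff]
    simpa using (Real.volume_singleton (a := l))
  have hpt : ∀ᵐ x : ℝ, x ∈ Set.uIoc (0:ℝ) l →
      ρ * c / 2 * (2 * T x t * Tt x t) + τq / (2 * k) * (2 * q x t * qt x t)
      = (-1 : ℝ) * (Tx x t * q x t + T x t * qx x t) + (-(1/k)) * (q x t) ^ 2
        + (-(μ2/k)) * (qx x t) ^ 2 + (μ2/k) * (qx x t * qx x t + q x t * qxx x t) := by
    filter_upwards [hne] with x hxl hx
    rw [hIoc] at hx
    have hxo : x ∈ Ioo (0:ℝ) l := ⟨hx.1, lt_of_le_of_ne hx.2 hxl⟩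
    have h1 := pde1 x hxo t ht
    have h2 := pde2 x hxo t ht
    have e1 : Tt x t = -(qx x t) / (ρ * c) := by
      field_simp
      linarith
    have e2 : qt x t = (-(q x t) + μ2 * qxx x t - k * Tx x t) / τq := by
      field_simp
      linarith
    rw [e1, e2]
    field_simp
    ring
  calc
    ρ * c / 2 * (∫ x in (0:ℝ)..l, 2 * T x t * Tt x t)
        + τq / (2 * k) * (∫ x in (0:ℝ)..l, 2 * q x t * qt x t)
      = ∫ x in (0:ℝ)..l, (ρ * c / 2 * (2 * T x t * Tt x t)
          + τq / (2 * k) * (2 * q x t * qt x t)) := by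
        rw [← intervalIntegral.integral_const_mul, ← intervalIntegral.integral_const_mul,
          ← intervalIntegral.integral_add
            ((hII ((continuous_const.continuousOn.fun_mul cT).fun_mul cTt)).const_mul _)
            ((hII ((continuous_const.continuousOn.fun_mul cq).fun_mul cqt)).const_mul _)]
    _ = ∫ x in (0:ℝ)..l, ((-1 : ℝ) * (Tx x t * q x t + T x t * qx x t)
          + (-(1/k)) * (q x t) ^ 2 + (-(μ2/k)) * (qx x t) ^ 2
          + (μ2/k) * (qx x t * qx x t + q x t * qxx x t)) :=
        intervalIntegral.integral_congr_ae hpt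
    _ = (-1 : ℝ) * (∫ x in (0:ℝ)..l, (Tx x t * q x t + T x t * qx x t))
          + (-(1/k)) * (∫ x in (0:ℝ)..l, (q x t) ^ 2)
          + (-(μ2/k)) * (∫ x in (0:ℝ)..l, (qx x t) ^ 2)
          + (μ2/k) * (∫ x in (0:ℝ)..l, (qx x t * qx x t + q x t * qxx x t)) := by
        have i1 := (hII ((cTx.fun_mul cq).fun_add (cT.fun_mul cqx))).const_mul (-1 : ℝ)
        have i2 := (hII (cq.fun_pow 2)).const_mul (-(1/k))
        have i3 := (hII (cqx.fun_pow 2)).const_mul (-(μ2/k))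
        have i4 := (hII ((cqx.fun_mul cqx).fun_add (cq.fun_mul cqxx))).const_mul (μ2/k)
        rw [intervalIntegral.integral_add (((i1.add i2).add i3)) i4,
          intervalIntegral.integral_add (i1.add i2) i3,
          intervalIntegral.integral_add i1 i2,
          intervalIntegral.integral_const_mul, intervalIntegral.integral_const_mul,
          intervalIntegral.integral_const_mul, intervalIntegral.integral_const_mul]
    _ = -(1 / k) * (∫ x in (0:ℝ)..l, (q x t) ^ 2)
          - μ2 / k * (∫ x in (0:ℝ)..l, (qx x t) ^ 2) := by
        rw [ibp1, ibp2]; ring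

/-- for a classical solution of the Guyer–Krumhansl system, for every
`t ≥ 0` the functional energy `E` is differentiable at `t` with
`E'(t) = −(1/k)∫₀ˡ q² dx − (μ²/k)∫₀ˡ (∂ₓq)² dx ≤ 0`. -/
theorem gk_energy_derivative
    (l ρ c τq μ2 k : ℝ) (hl : 0 < l) (hρ : 0 < ρ) (hc : 0 < c)
    (hτq : 0 < τq) (hμ2 : 0 < μ2) (hk : 0 < k)
    (T q Tt Tx qt qx qxx : ℝ → ℝ → ℝ)
    (hgk : IsGKSolution l ρ c τq μ2 k T q Tt Tx qt qx qxx) :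
    ∀ t : ℝ, 0 ≤ t →
      HasDerivWithinAt (gkEnergy l ρ c τq k T q)
        (-(1 / k) * (∫ x in (0:ℝ)..l, (q x t) ^ 2)
          - μ2 / k * (∫ x in (0:ℝ)..l, (qx x t) ^ 2)) (Ici (0:ℝ)) t
      ∧ -(1 / k) * (∫ x in (0:ℝ)..l, (q x t) ^ 2)
          - μ2 / k * (∫ x in (0:ℝ)..l, (qx x t) ^ 2) ≤ 0 := by
  have contT2 : ContinuousOn (fun p : ℝ × ℝ => (T p.1 p.2) ^ 2) (Icc (0:ℝ) l ×ˢ Ici (0:ℝ)) :=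
    hgk.contT.pow 2
  have contq2 : ContinuousOn (fun p : ℝ × ℝ => (q p.1 p.2) ^ 2) (Icc (0:ℝ) l ×ˢ Ici (0:ℝ)) :=
    hgk.contq.pow 2
  have contqx2 : ContinuousOn (fun p : ℝ × ℝ => (qx p.1 p.2) ^ 2) (Icc (0:ℝ) l ×ˢ Ici (0:ℝ)) :=
    hgk.contqx.pow 2
  -- the candidate derivative function
  set D : ℝ → ℝ := fun s => -(1 / k) * (∫ x in (0:ℝ)..l, (q x s) ^ 2)
    - μ2 / k * (∫ x in (0:ℝ)..l, (qx x s) ^ 2) with hD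
  -- `E` has derivative `D s` at every `s > 0`
  have hDD : ∀ s : ℝ, 0 < s → HasDerivAt (gkEnergy l ρ c τq k T q) (D s) s := by
    intro s hs
    have h1 : HasDerivAt (fun u => ∫ x in (0:ℝ)..l, (T x u) ^ 2)
        (∫ x in (0:ℝ)..l, 2 * T x s * Tt x s) s := by
      refine gk_deriv_int (g := fun x u => (T x u) ^ 2)
        (gt := fun x u => 2 * T x u * Tt x u) hl contT2
        ((continuous_const.continuousOn.mul hgk.contT).mul hgk.contTt) ?_ hs
      intro x hx u hu
      simpa using (hgk.hTt x hx u hu).fun_pow 2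
    have h2 : HasDerivAt (fun u => ∫ x in (0:ℝ)..l, (q x u) ^ 2)
        (∫ x in (0:ℝ)..l, 2 * q x s * qt x s) s := by
      refine gk_deriv_int (g := fun x u => (q x u) ^ 2)
        (gt := fun x u => 2 * q x u * qt x u) hl contq2
        ((continuous_const.continuousOn.mul hgk.contq).mul hgk.contqt) ?_ hs
      intro x hx u hu
      simpa using (hgk.hqt x hx u hu).fun_pow 2
    have hE := (h1.const_mul (ρ * c / 2)).add (h2.const_mul (τq / (2 * k)))
    have hval := gk_value hl hρ hc hτq hk hgk hs
    rw [hval] at hE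
    exact hE
  intro t ht
  constructor
  · rcases ht.lt_or_eq with htpos | hteq
    · exact (hDD t htpos).hasDerivWithinAt
    · subst hteq
      -- use the extension-by-continuity lemma at the left endpoint
      have hq2cont := gk_cont_int (g := fun x u => (q x u) ^ 2) hl contq2 0 Set.self_mem_Ici
      have hqx2cont := gk_cont_int (g := fun x u => (qx x u) ^ 2) hl contqx2 0 Set.self_mem_Ici
      have hT2cont := gk_cont_int (g := fun x u => (T x u) ^ 2) hl contT2 0 Set.self_mem_Ici
      have hDcont : ContinuousWithinAt D (Ici (0:ℝ)) 0 :=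
        (continuousWithinAt_const.mul hq2cont).sub (continuousWithinAt_const.mul hqx2cont)
      refine hasDerivWithinAt_Ici_of_tendsto_deriv (s := Ioi (0:ℝ))
        (fun s hs => ((hDD s hs).differentiableAt).differentiableWithinAt) ?_
        self_mem_nhdsWithin ?_
      · exact (((continuousWithinAt_const.mul hT2cont).add
          (continuousWithinAt_const.mul hq2cont)).mono Ioi_subset_Ici_self :)
      · refine Filter.Tendsto.congr' ?_ (hDcont.mono Ioi_subset_Ici_self)
        filter_upwards [self_mem_nhdsWithin] with s hs
        exact ((hDD s hs).deriv).symm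
  · have hq2 : 0 ≤ ∫ x in (0:ℝ)..l, (q x t) ^ 2 :=
      intervalIntegral.integral_nonneg hl.le (fun x _ => sq_nonneg _)
    have hqx2 : 0 ≤ ∫ x in (0:ℝ)..l, (qx x t) ^ 2 :=
      intervalIntegral.integral_nonneg hl.le (fun x _ => sq_nonneg _)
    have h1 : 0 ≤ (1 / k) * (∫ x in (0:ℝ)..l, (q x t) ^ 2) :=
      mul_nonneg (by positivity) hq2
    have h2 : 0 ≤ (μ2 / k) * (∫ x in (0:ℝ)..l, (qx x t) ^ 2) :=
      mul_nonneg (by positivity) hqx2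
    linarith
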